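/- Under the decomposition of the previous mixture bound, the marginal H∆H-divergence is bounded by the expected class-conditional divergence plus twice the ℓ₁ class-prior gap: d_{H∆H}(P_X, Q_X) ≤ E_{Y}[d_{H∆H}(P_{X|Y}, Q_{X|Y})] + 2‖P_Y − Q_Y‖₁. -/
import Mathlib


/-- Marginal `H∆H`-divergence bound via class-conditional divergences.
`G` indexes the hypotheses `g ∈ H∆H`; `p y g` (resp. `q y g`) is the class-conditional
probability `P_{X|Y=y}(g = 1)` (resp. `Q_{X|Y=y}(g = 1)`), and the marginals are the
mixtures `P_X(g=1) = Σ_y P_Y(y) p y g`, `Q_X(g=1) = Σ_y Q_Y(y) q y g`. Then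
`d_{H∆H}(P_X, Q_X) ≤ E_Y[d_{H∆H}(P_{X|Y}, Q_{X|Y})] + 2‖P_Y − Q_Y‖₁`. -/
theorem marginal_dHdH_le_conditional {Y G : Type*} [Fintype Y] [Nonempty G]
    (PY QY : Y → ℝ) (p q : Y → G → ℝ)
    (hPY : ∀ y, 0 ≤ PY y) (hQY : ∀ y, 0 ≤ QY y)
    (hPY1 : ∑ y, PY y = 1) (hQY1 : ∑ y, QY y = 1)
    (hp : ∀ y g, p y g ∈ Set.Icc (0 : ℝ) 1) (hq : ∀ y g, q y g ∈ Set.Icc (0 : ℝ) 1) :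
    2 * sSup {r : ℝ | ∃ g, r = |(∑ y, PY y * p y g) - ∑ y, QY y * q y g|}
      ≤ (∑ y, PY y * (2 * sSup {r : ℝ | ∃ g, r = |p y g - q y g|}))
        + 2 * ∑ y, |PY y - QY y| := by
  set s : Y → ℝ := fun y => sSup {r : ℝ | ∃ g, r = |p y g - q y g|} with hs
  have hbdd : ∀ y, BddAbove {r : ℝ | ∃ g, r = |p y g - q y g|} := by
    intro y
    refine ⟨2, ?_⟩
    rintro r ⟨g, rfl⟩
    have h1 := hp y g
    have h2 := hq y g
    rw [Set.mem_Icc] at h1 h2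
    rw [abs_le]; constructor <;> linarith
  have hle : ∀ y g, |p y g - q y g| ≤ s y := fun y g =>
    le_csSup (hbdd y) ⟨g, rfl⟩
  have hs0 : ∀ y, 0 ≤ s y := fun y =>
    le_trans (abs_nonneg _) (hle y (Classical.arbitrary G))
  have key : ∀ g : G, |(∑ y, PY y * p y g) - ∑ y, QY y * q y g|
      ≤ (∑ y, PY y * s y) + ∑ y, |PY y - QY y| := by
    intro g
    have h1 : |(∑ y, PY y * p y g) - ∑ y, QY y * q y g|
        ≤ ∑ y, |PY y * p y g - QY y * q y g| := by
      rw [← Finset.sum_sub_distrib]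
      exact Finset.abs_sum_le_sum_abs _ _
    have h2 : ∀ y, |PY y * p y g - QY y * q y g| ≤ PY y * s y + |PY y - QY y| := by
      intro y
      have hd : PY y * p y g - QY y * q y g
          = PY y * (p y g - q y g) + (PY y - QY y) * q y g := by ring
      calc |PY y * p y g - QY y * q y g|
          ≤ |PY y * (p y g - q y g)| + |(PY y - QY y) * q y g| := by
            rw [hd]; exact abs_add_le _ _
        _ ≤ PY y * s y + |PY y - QY y| := by
            rw [abs_mul, abs_mul, abs_of_nonneg (hPY y)]
            have hq1 : |q y g| ≤ 1 := by
              have h2 := hq y g; rw [Set.mem_Icc] at h2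
              rw [abs_le]; constructor <;> linarith
            have := mul_le_mul_of_nonneg_left (hle y g) (hPY y)
            nlinarith [abs_nonneg (PY y - QY y)]
    calc |(∑ y, PY y * p y g) - ∑ y, QY y * q y g|
        ≤ ∑ y, |PY y * p y g - QY y * q y g| := h1
      _ ≤ ∑ y, (PY y * s y + |PY y - QY y|) := Finset.sum_le_sum (fun y _ => h2 y)
      _ = (∑ y, PY y * s y) + ∑ y, |PY y - QY y| := Finset.sum_add_distrib
  have hB : 0 ≤ (∑ y, PY y * s y) + ∑ y, |PY y - QY y| := by
    apply add_nonneg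
    · exact Finset.sum_nonneg fun y _ => mul_nonneg (hPY y) (hs0 y)
    · exact Finset.sum_nonneg fun y _ => abs_nonneg _
  have hsup : sSup {r : ℝ | ∃ g, r = |(∑ y, PY y * p y g) - ∑ y, QY y * q y g|}
      ≤ (∑ y, PY y * s y) + ∑ y, |PY y - QY y| := by
    apply Real.sSup_le
    · rintro r ⟨g, rfl⟩; exact key g
    · exact hB
  have : ∑ y, PY y * (2 * s y) = 2 * ∑ y, PY y * s y := by
    rw [Finset.mul_sum]; congr 1; ext y; ring
  rw [this]
  linarith
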